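/- Let λ > −1/2 be real, let k ∈ ℕ, and let ν ≥ k be real. Then for every x ∈ (−1,1), the k-th derivative of ʳG_ν^{(λ)} at x equals (−1)^k · ((−ν)_k (ν+2λ)_k)/(2^k (λ+1/2)_k) · ʳG_{ν−k}^{(λ+k)}(x), where (a)_k = a(a+1)⋯(a+k−1) is the Pochhammer symbol. -/

import Mathlib

open Real

/-- Pochhammer symbol `(a)_n = a (a+1) ⋯ (a+n-1)` for a real base. -/
noncomputable def poch (a : ℝ) (n : ℕ) : ℝ := ∏ i ∈ Finset.range n, (a + (i : ℝ))

/-- The right generalized Gegenbauer function of fractional degree. -/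
noncomputable def rG (lam nu x : ℝ) : ℝ :=
  ∑' j : ℕ, (poch (-nu) j * poch (nu + 2 * lam) j /
    ((j.factorial : ℝ) * poch (lam + 1 / 2) j)) * ((1 - x) / 2) ^ j

open Filter Topology

/-- The coefficients of the GGF-F series. -/
noncomputable def ggfC (lam nu : ℝ) (j : ℕ) : ℝ :=
  poch (-nu) j * poch (nu + 2 * lam) j / ((j.factorial : ℝ) * poch (lam + 1 / 2) j)

lemma rG_eq (lam nu x : ℝ) : rG lam nu x = ∑' j : ℕ, ggfC lam nu j * ((1 - x) / 2) ^ j := rfl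

lemma poch_succ (a : ℝ) (j : ℕ) : poch a (j + 1) = poch a j * (a + j) :=
  Finset.prod_range_succ _ _

lemma poch_succ' (a : ℝ) (j : ℕ) : poch a (j + 1) = a * poch (a + 1) j := by
  rw [poch, Finset.prod_range_succ']
  simp only [Nat.cast_zero, add_zero]
  rw [mul_comm, poch]
  congr 1
  refine Finset.prod_congr rfl fun i _ => ?_
  push_cast; ring

lemma poch_pos {a : ℝ} (ha : 0 < a) (n : ℕ) : 0 < poch a n :=
  Finset.prod_pos fun i _ => by positivity

/-- Ratio of consecutive coefficients. -/
noncomputable def ggfR (lam nu : ℝ) (j : ℕ) : ℝ :=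
  ((-nu + j) * (nu + 2 * lam + j)) / (((j : ℝ) + 1) * (lam + 1 / 2 + j))

lemma ggfC_succ (lam nu : ℝ) (hlam : -(1 / 2) < lam) (j : ℕ) :
    ggfC lam nu (j + 1) = ggfC lam nu j * ggfR lam nu j := by
  have h1 : (0:ℝ) < lam + 1 / 2 := by linarith
  have h2 : (0:ℝ) < lam + 1 / 2 + j := by positivity
  have h3 : poch (lam + 1 / 2) j ≠ 0 := (poch_pos h1 j).ne'
  have h4 : ((j.factorial : ℝ)) ≠ 0 := Nat.cast_ne_zero.2 j.factorial_ne_zero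
  have h5 : ((j : ℝ) + 1) ≠ 0 := by positivity
  rw [ggfC, ggfC, ggfR, poch_succ, poch_succ, poch_succ, Nat.factorial_succ]
  push_cast
  field_simp

lemma ggfC_shift (lam nu : ℝ) (hlam : -(1 / 2) < lam) (j : ℕ) :
    ggfC lam nu (j + 1) * ((j : ℝ) + 1) =
      (-nu) * (nu + 2 * lam) / (lam + 1 / 2) * ggfC (lam + 1) (nu - 1) j := by
  have h1 : (0:ℝ) < lam + 1 / 2 := by linarith
  have h4 : ((j.factorial : ℝ)) ≠ 0 := Nat.cast_ne_zero.2 j.factorial_ne_zero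
  have e1 : poch (-nu) (j + 1) = (-nu) * poch (-(nu - 1)) j := by
    rw [poch_succ']; congr 2; ring
  have e2 : poch (nu + 2 * lam) (j + 1) = (nu + 2 * lam) * poch (nu - 1 + 2 * (lam + 1)) j := by
    rw [poch_succ']; congr 2; ring
  have e3 : poch (lam + 1 / 2) (j + 1) = (lam + 1 / 2) * poch (lam + 1 + 1 / 2) j := by
    rw [poch_succ']; congr 2; ring
  have h3' : poch (lam + 1 + 1 / 2) j ≠ 0 := (poch_pos (by linarith) j).ne'
  rw [ggfC, ggfC, e1, e2, e3, Nat.factorial_succ]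
  push_cast
  set b : ℝ := lam + 1 / 2 with hb
  have hb0 : b ≠ 0 := ne_of_gt h1
  set P : ℝ := poch (-(nu - 1)) j
  set Q : ℝ := poch (nu - 1 + 2 * (lam + 1)) j
  set R : ℝ := poch (lam + 1 + 1 / 2) j
  field_simp

lemma tendsto_aux (a b : ℝ) :
    Tendsto (fun j : ℕ => ((j : ℝ) + a) / ((j : ℝ) + b)) atTop (𝓝 1) := by
  have h1 : Tendsto (fun j : ℕ => (j : ℝ) + b) atTop atTop :=
    tendsto_atTop_add_const_right _ b tendsto_natCast_atTop_atTop
  have h2 : Tendsto (fun j : ℕ => (a - b) / ((j : ℝ) + b)) atTop (𝓝 0) :=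
    tendsto_const_nhds.div_atTop h1
  have h3 : Tendsto (fun j : ℕ => 1 + (a - b) / ((j : ℝ) + b)) atTop (𝓝 (1 + 0)) :=
    tendsto_const_nhds.add h2
  rw [add_zero] at h3
  refine h3.congr' ?_
  filter_upwards [h1.eventually_ge_atTop 1] with j hj
  have : ((j : ℝ) + b) ≠ 0 := by linarith
  field_simp
  ring

lemma tendsto_ggfR (lam nu : ℝ) : Tendsto (ggfR lam nu) atTop (𝓝 1) := by
  have := (tendsto_aux (-nu) (lam + 1 / 2)).mul (tendsto_aux (nu + 2 * lam) 1)
  rw [one_mul] at this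
  refine this.congr fun j => ?_
  rw [ggfR, div_mul_div_comm]
  congr 1 <;> ring

lemma summable_u (lam nu : ℝ) (hlam : -(1 / 2) < lam) {r : ℝ} (hr0 : 0 < r) (hr1 : r < 1) :
    Summable (fun j : ℕ => |ggfC lam nu j| * ((j : ℝ) + 1) * r ^ j / r) := by
  set u : ℕ → ℝ := fun j => |ggfC lam nu j| * ((j : ℝ) + 1) * r ^ j / r with hu
  have hun : ∀ j, 0 ≤ u j := fun j => by positivity
  refine summable_of_ratio_norm_eventually_le (r := (1 + r) / 2) (by linarith) ?_
  have hv : Tendsto (fun j : ℕ => |ggfR lam nu j| * (((j : ℝ) + 2) / ((j : ℝ) + 1)) * r)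
      atTop (𝓝 (|1| * 1 * r)) :=
    (((tendsto_ggfR lam nu).abs).mul (tendsto_aux 2 1)).mul_const r
  rw [abs_one, one_mul, one_mul] at hv
  filter_upwards [hv.eventually_lt_const (by linarith : r < (1 + r) / 2)] with j hj
  have key : u (j + 1) = (|ggfR lam nu j| * (((j : ℝ) + 2) / ((j : ℝ) + 1)) * r) * u j := by
    rw [hu]
    simp only
    rw [ggfC_succ lam nu hlam, abs_mul]
    have h5 : ((j : ℝ) + 1) ≠ 0 := by positivity
    push_cast
    field_simp
    ring
  rw [Real.norm_of_nonneg (hun _), Real.norm_of_nonneg (hun _), key]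
  exact mul_le_mul_of_nonneg_right hj.le (hun j)

lemma hasDerivAt_rG (lam nu : ℝ) (hlam : -(1 / 2) < lam) (x : ℝ)
    (hx : x ∈ Set.Ioo (-1 : ℝ) 1) :
    HasDerivAt (rG lam nu)
      (-((-nu) * (nu + 2 * lam) / (2 * (lam + 1 / 2))) * rG (lam + 1) (nu - 1) x) x := by
  obtain ⟨hx1, hx2⟩ := hx
  set a : ℝ := (-1 + x) / 2 with ha
  set r : ℝ := (1 - a) / 2 with hr
  have hr0 : 0 < r := by rw [hr, ha]; linarith
  have hr1 : r < 1 := by rw [hr, ha]; linarith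
  have hxt : x ∈ Set.Ioo a 1 := ⟨by rw [ha]; linarith, hx2⟩
  set g : ℕ → ℝ → ℝ := fun j y => ggfC lam nu j * ((1 - y) / 2) ^ j with hg
  set g' : ℕ → ℝ → ℝ := fun j y =>
    ggfC lam nu j * ((j : ℝ) * ((1 - y) / 2) ^ (j - 1) * (-1 / 2)) with hg'
  set u : ℕ → ℝ := fun j => |ggfC lam nu j| * ((j : ℝ) + 1) * r ^ j / r with hu
  have hus := summable_u lam nu hlam hr0 hr1
  have hbd : ∀ y ∈ Set.Ioo a 1, |(1 - y) / 2| ≤ r := by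
    intro y hy
    rw [abs_of_nonneg (by linarith [hy.2] : (0:ℝ) ≤ (1 - y) / 2), hr]
    linarith [hy.1]
  have hderiv : ∀ (j : ℕ) (y : ℝ), HasDerivAt (g j) (g' j y) y := by
    intro j y
    have h0 : HasDerivAt (fun y : ℝ => (1 - y) / 2) (-1 / 2) y :=
      ((hasDerivAt_id y).const_sub 1).div_const 2
    exact (h0.pow j).const_mul _
  have hbound : ∀ (j : ℕ), ∀ y ∈ Set.Ioo a 1, ‖g' j y‖ ≤ u j := by
    intro j y hy
    rw [hg', hu]
    simp only [Real.norm_eq_abs, abs_mul]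
    rw [abs_pow]
    cases j with
    | zero =>
      simp only [Nat.cast_zero, abs_zero, zero_mul, mul_zero, pow_zero]
      positivity
    | succ n =>
      have hb := hbd y hy
      have h1 : |(1 - y) / 2| ^ n ≤ r ^ n := pow_le_pow_left₀ (abs_nonneg _) hb n
      have h2 : |((n : ℝ) + 1)| = (n : ℝ) + 1 := abs_of_nonneg (by positivity)
      have h3 : |(-1 : ℝ) / 2| = 1 / 2 := by norm_num
      push_cast
      rw [h2, h3]
      have hrpow : r ^ (n + 1) / r = r ^ n := by
        rw [pow_succ]; field_simp
      rw [mul_div_assoc, hrpow]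
      have habs : (0:ℝ) ≤ |ggfC lam nu (n + 1)| := abs_nonneg _
      have hstep : ((n:ℝ) + 1) * |(1 - y) / 2| ^ n * (1 / 2) ≤ ((n:ℝ) + 1 + 1) * r ^ n := by
        nlinarith [pow_nonneg (abs_nonneg ((1 - y) / 2)) n, pow_nonneg hr0.le n]
      calc |ggfC lam nu (n + 1)| * (((n:ℝ) + 1) * |(1 - y) / 2| ^ n * (1 / 2))
          ≤ |ggfC lam nu (n + 1)| * (((n:ℝ) + 1 + 1) * r ^ n) :=
            mul_le_mul_of_nonneg_left hstep habs
        _ = |ggfC lam nu (n + 1)| * ((n:ℝ) + 1 + 1) * r ^ n := by ring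
  have hg0 : Summable fun j => g j x := by
    refine Summable.of_norm_bounded hus fun j => ?_
    rw [hg]
    simp only [Real.norm_eq_abs, abs_mul, abs_pow]
    have h1 : |(1 - x) / 2| ^ j ≤ r ^ j := pow_le_pow_left₀ (abs_nonneg _) (hbd x hxt) j
    have h2 : |ggfC lam nu j| * |(1 - x) / 2| ^ j ≤ |ggfC lam nu j| * r ^ j :=
      mul_le_mul_of_nonneg_left h1 (abs_nonneg _)
    refine h2.trans ?_
    have h3 : r ^ j ≤ ((j:ℝ) + 1) * r ^ j / r := by
      rw [le_div_iff₀ hr0]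
      nlinarith [pow_nonneg hr0.le j]
    calc |ggfC lam nu j| * r ^ j ≤ |ggfC lam nu j| * (((j:ℝ) + 1) * r ^ j / r) :=
          mul_le_mul_of_nonneg_left h3 (abs_nonneg _)
      _ = |ggfC lam nu j| * ((j:ℝ) + 1) * r ^ j / r := by ring
  have main : HasDerivAt (fun z => ∑' j, g j z) (∑' j, g' j x) x :=
    hasDerivAt_tsum_of_isPreconnected hus isOpen_Ioo isPreconnected_Ioo
      (fun j y _ => hderiv j y) hbound hxt hg0 hxt
  have e1 : (fun z => ∑' j, g j z) = rG lam nu := by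
    funext z; rw [rG_eq]
  have hs' : Summable fun j => g' j x :=
    Summable.of_norm_bounded hus fun j => hbound j x hxt
  have e2 : ∑' j, g' j x =
      -((-nu) * (nu + 2 * lam) / (2 * (lam + 1 / 2))) * rG (lam + 1) (nu - 1) x := by
    rw [hs'.tsum_eq_zero_add]
    have hz : g' 0 x = 0 := by rw [hg']; simp
    have hptwise : ∀ j : ℕ, g' (j + 1) x =
        -((-nu) * (nu + 2 * lam) / (2 * (lam + 1 / 2))) *
          (ggfC (lam + 1) (nu - 1) j * ((1 - x) / 2) ^ j) := by
      intro j
      rw [hg']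
      simp only [Nat.add_sub_cancel]
      have hsh := ggfC_shift lam nu hlam j
      have h1 : (lam + 1 / 2) ≠ 0 := by intro h; linarith
      push_cast
      calc ggfC lam nu (j + 1) * (((j:ℝ) + 1) * ((1 - x) / 2) ^ j * (-1 / 2))
          = (ggfC lam nu (j + 1) * ((j:ℝ) + 1)) * (((1 - x) / 2) ^ j * (-1 / 2)) := by ring
        _ = ((-nu) * (nu + 2 * lam) / (lam + 1 / 2) * ggfC (lam + 1) (nu - 1) j) *
            (((1 - x) / 2) ^ j * (-1 / 2)) := by rw [hsh]
        _ = -((-nu) * (nu + 2 * lam) / (2 * (lam + 1 / 2))) *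
            (ggfC (lam + 1) (nu - 1) j * ((1 - x) / 2) ^ j) := by
            set b : ℝ := lam + 1 / 2 with hb
            set T : ℝ := ((1 - x) / 2) ^ j with hT
            set c : ℝ := ggfC (lam + 1) (nu - 1) j with hc
            field_simp
    rw [hz, zero_add, tsum_congr hptwise, tsum_mul_left, rG_eq]
  rw [e1, e2] at main
  exact main

/-- The `k`-th derivative of a GGF-F is again a GGF-F, with shifted parameters. -/
theorem ggf_iterated_deriv (lam : ℝ) (hlam : -(1 / 2) < lam) (k : ℕ) (nu : ℝ)
    (hnu : (k : ℝ) ≤ nu) (x : ℝ) (hx : x ∈ Set.Ioo (-1 : ℝ) 1) :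
    iteratedDeriv k (rG lam nu) x =
      (-1 : ℝ) ^ k * (poch (-nu) k * poch (nu + 2 * lam) k) /
          (2 ^ k * poch (lam + 1 / 2) k) *
        rG (lam + k) (nu - k) x := by
  have key : ∀ k : ℕ, ∀ y ∈ Set.Ioo (-1 : ℝ) 1,
      iteratedDeriv k (rG lam nu) y =
        (-1 : ℝ) ^ k * (poch (-nu) k * poch (nu + 2 * lam) k) /
            (2 ^ k * poch (lam + 1 / 2) k) *
          rG (lam + k) (nu - k) y := by
    intro k
    induction k with
    | zero => intro y hy; simp [poch]
    | succ n ih =>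
      intro y hy
      have hn0 : (0:ℝ) ≤ (n : ℝ) := Nat.cast_nonneg n
      have hlamn : -(1 / 2 : ℝ) < lam + n := by linarith
      set A : ℝ := (-1 : ℝ) ^ n * (poch (-nu) n * poch (nu + 2 * lam) n) /
          (2 ^ n * poch (lam + 1 / 2) n) with hA
      rw [iteratedDeriv_succ]
      have hEq : deriv (iteratedDeriv n (rG lam nu)) y
          = deriv (fun z => A * rG (lam + n) (nu - n) z) y := by
        apply Filter.EventuallyEq.deriv_eq
        filter_upwards [isOpen_Ioo.mem_nhds hy] with z hz using ih z hz
      rw [hEq]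
      have hd := HasDerivAt.const_mul A (hasDerivAt_rG (lam + n) (nu - n) hlamn y hy)
      rw [hd.deriv]
      have harg1 : (lam + n) + 1 = lam + ((n + 1 : ℕ) : ℝ) := by push_cast; ring
      have harg2 : (nu - n) - 1 = nu - ((n + 1 : ℕ) : ℝ) := by push_cast; ring
      rw [harg1, harg2]
      have hP : poch (lam + 1 / 2) n ≠ 0 := (poch_pos (by linarith) n).ne'
      have hQ : (lam + 1 / 2 + (n:ℝ)) ≠ 0 := by
        have : (0:ℝ) < lam + 1 / 2 + (n:ℝ) := by linarith
        exact ne_of_gt this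
      have h2n : ((2:ℝ) ^ n) ≠ 0 := by positivity
      have hcoef : A * (-((-(nu - n)) * ((nu - n) + 2 * (lam + n)) / (2 * ((lam + n) + 1 / 2)))) =
          (-1 : ℝ) ^ (n + 1) * (poch (-nu) (n + 1) * poch (nu + 2 * lam) (n + 1)) /
            (2 ^ (n + 1) * poch (lam + 1 / 2) (n + 1)) := by
        rw [hA, poch_succ, poch_succ, poch_succ, pow_succ, pow_succ]
        rw [show lam + (n:ℝ) + 1 / 2 = lam + 1 / 2 + (n:ℝ) from by ring]
        set b : ℝ := lam + 1 / 2 with hb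
        have hb0 : b ≠ 0 := by rw [hb]; intro h; linarith
        set P : ℝ := poch (-nu) n
        set Q : ℝ := poch (nu + 2 * lam) n
        set R : ℝ := poch b n
        field_simp
        ring
      rw [← hcoef]
      ring
  exact key k x hx
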